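/- Let (A,(·,·,·)) be a partially associative 3-algebra over a field k. Define the local commutator {x,y,z} := (x,y,z) − (x,z,y). Then (A,{·,·,·}) is a generalized pre-Lie algebra of order 3. -/

import Mathlib

/-- The cyclic sum `○{x,y,z} = {x,y,z} + {y,z,x} + {z,x,y}` of a ternary operation. -/
def cyc3 {A : Type*} [AddCommGroup A] (f : A → A → A → A) : A → A → A → A :=
  fun x y z => f x y z + f y z x + f z x y

/-- A partially associative 3-algebra structure on a ternary operation. -/
def PartAssoc3 {A : Type*} [AddCommGroup A] (m : A → A → A → A) : Prop :=
  ∀ x1 x2 x3 x4 x5 : A,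
    m (m x1 x2 x3) x4 x5 + m x1 (m x2 x3 x4) x5 + m x1 x2 (m x3 x4 x5) = 0

/-- The defining relations of a generalized pre-Lie algebra of order 3. -/
def GenPreLie3 {A : Type*} [AddCommGroup A] (f : A → A → A → A) : Prop :=
  (∀ x1 x2 x3 : A, f x1 x2 x3 = - f x1 x3 x2) ∧
  (∀ x1 x2 x3 x4 x5 : A,
    f (f x1 x2 x3) x4 x5 =
      f (f x1 x2 x4) x3 x5 - f (f x1 x2 x5) x3 x4 - f (f x1 x3 x4) x2 x5
        + f (f x1 x3 x5) x2 x4 - f (f x1 x4 x5) x2 x3 - f x1 (cyc3 f x2 x3 x4) x5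
        + f x1 (cyc3 f x2 x3 x5) x4 - f x1 (cyc3 f x2 x4 x5) x3
        + f x1 (cyc3 f x3 x4 x5) x2)

/-- Let `(A, (·,·,·))` be a partially associative 3-algebra over a field `k`.
Then the local commutator `{x,y,z} := (x,y,z) − (x,z,y)` makes `A` a generalized pre-Lie
algebra of order 3. -/
theorem partAssoc3_localComm_genPreLie3 {k A : Type*} [Field k] [AddCommGroup A] [Module k A]
    (m : A →ₗ[k] A →ₗ[k] A →ₗ[k] A)
    (h : PartAssoc3 (fun x y z => m x y z)) :
    GenPreLie3 (fun x y z => m x y z - m x z y) := by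
  constructor
  · intro x1 x2 x3
    simp only [neg_sub]
  · intro x1 x2 x3 x4 x5
    have H : ∀ a b c d : A,
        m (m x1 a b) c d + m x1 (m a b c) d + m x1 a (m b c d) = 0 :=
      fun a b c d => h x1 a b c d
    rw [← sub_eq_zero]
    simp only [cyc3]
    trans ((m (m x1 x2 x3) x4 x5 + m x1 (m x2 x3 x4) x5 + m x1 x2 (m x3 x4 x5))
      - (m (m x1 x2 x3) x5 x4 + m x1 (m x2 x3 x5) x4 + m x1 x2 (m x3 x5 x4))
      - (m (m x1 x2 x4) x3 x5 + m x1 (m x2 x4 x3) x5 + m x1 x2 (m x4 x3 x5))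
      + (m (m x1 x2 x4) x5 x3 + m x1 (m x2 x4 x5) x3 + m x1 x2 (m x4 x5 x3))
      + (m (m x1 x2 x5) x3 x4 + m x1 (m x2 x5 x3) x4 + m x1 x2 (m x5 x3 x4))
      - (m (m x1 x2 x5) x4 x3 + m x1 (m x2 x5 x4) x3 + m x1 x2 (m x5 x4 x3))
      - (m (m x1 x3 x2) x4 x5 + m x1 (m x3 x2 x4) x5 + m x1 x3 (m x2 x4 x5))
      + (m (m x1 x3 x2) x5 x4 + m x1 (m x3 x2 x5) x4 + m x1 x3 (m x2 x5 x4))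
      + (m (m x1 x3 x4) x2 x5 + m x1 (m x3 x4 x2) x5 + m x1 x3 (m x4 x2 x5))
      - (m (m x1 x3 x4) x5 x2 + m x1 (m x3 x4 x5) x2 + m x1 x3 (m x4 x5 x2))
      - (m (m x1 x3 x5) x2 x4 + m x1 (m x3 x5 x2) x4 + m x1 x3 (m x5 x2 x4))
      + (m (m x1 x3 x5) x4 x2 + m x1 (m x3 x5 x4) x2 + m x1 x3 (m x5 x4 x2))
      + (m (m x1 x4 x2) x3 x5 + m x1 (m x4 x2 x3) x5 + m x1 x4 (m x2 x3 x5))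
      - (m (m x1 x4 x2) x5 x3 + m x1 (m x4 x2 x5) x3 + m x1 x4 (m x2 x5 x3))
      - (m (m x1 x4 x3) x2 x5 + m x1 (m x4 x3 x2) x5 + m x1 x4 (m x3 x2 x5))
      + (m (m x1 x4 x3) x5 x2 + m x1 (m x4 x3 x5) x2 + m x1 x4 (m x3 x5 x2))
      + (m (m x1 x4 x5) x2 x3 + m x1 (m x4 x5 x2) x3 + m x1 x4 (m x5 x2 x3))
      - (m (m x1 x4 x5) x3 x2 + m x1 (m x4 x5 x3) x2 + m x1 x4 (m x5 x3 x2))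
      - (m (m x1 x5 x2) x3 x4 + m x1 (m x5 x2 x3) x4 + m x1 x5 (m x2 x3 x4))
      + (m (m x1 x5 x2) x4 x3 + m x1 (m x5 x2 x4) x3 + m x1 x5 (m x2 x4 x3))
      + (m (m x1 x5 x3) x2 x4 + m x1 (m x5 x3 x2) x4 + m x1 x5 (m x3 x2 x4))
      - (m (m x1 x5 x3) x4 x2 + m x1 (m x5 x3 x4) x2 + m x1 x5 (m x3 x4 x2))
      - (m (m x1 x5 x4) x2 x3 + m x1 (m x5 x4 x2) x3 + m x1 x5 (m x4 x2 x3))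
      + (m (m x1 x5 x4) x3 x2 + m x1 (m x5 x4 x3) x2 + m x1 x5 (m x4 x3 x2)))
    · simp only [map_add, map_sub, LinearMap.add_apply, LinearMap.sub_apply]
      abel
    · simp only [H, add_zero, sub_zero, zero_add, zero_sub, sub_self, neg_zero]
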